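/- Fix integers M ≥ 1 and r ≥ 1. Let Ω be an open subset of the space of variables (w₀₀, w₁₀, w₀₁, v, p, θ₀, …, θ_M, ζ¹₀, …, ζ¹_{r+1}, ζ²₀, …, ζ²_{r+1}) on which v ≠ 0 and p ≠ 0. Let ϱ be a smooth function on Ω that does not depend on the variables ζ¹_{r+1} and ζ²_{r+1}, and define Tϱ := (w₁₀ + v·w₀₁)·∂ϱ/∂w₀₀ + (ζ²₀ + v·ζ¹₀ − (1/6)v³ + (θ₀ + v·θ₁ − v²/p)·ζ¹₁)·∂ϱ/∂w₁₀ + (ζ¹₀ + ½v²)·∂ϱ/∂w₀₁ + (p²/v)·∂ϱ/∂p + Σ_{i=1,2} Σ_{k=0}^{r} ζ^i_{k+1}·∂ϱ/∂ζ^i_k. Then Tϱ vanishes identically on Ω if and only if all the partial derivatives ∂ϱ/∂w₀₀, ∂ϱ/∂w₁₀, ∂ϱ/∂w₀₁, ∂ϱ/∂p, and ∂ϱ/∂ζ^i_k for i = 1,2 and k = 0,…,r vanish identically on Ω, i.e. if and only if ϱ depends only on v and θ₀, …, θ_M. -/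

import Mathlib

set_option maxRecDepth 16000


/-- The coordinate space
`(w₀₀, w₁₀, w₀₁, v, p, θ₀, …, θ_M, ζ¹₀, …, ζ¹_{r+1}, ζ²₀, …, ζ²_{r+1})`. -/
abbrev Pt8 (M r : ℕ) : Type :=
  ℝ × ℝ × ℝ × ℝ × ℝ × (Fin (M + 1) → ℝ) × (Fin (r + 2) → ℝ) × (Fin (r + 2) → ℝ)

section
variable (M r : ℕ)

/-- Replace the coordinate `w₀₀` by `t`. -/
def upd00 (q : Pt8 M r) (t : ℝ) : Pt8 M r := (t, q.2)

/-- Replace the coordinate `w₁₀` by `t`. -/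
def upd10 (q : Pt8 M r) (t : ℝ) : Pt8 M r := (q.1, t, q.2.2)

/-- Replace the coordinate `w₀₁` by `t`. -/
def upd01 (q : Pt8 M r) (t : ℝ) : Pt8 M r := (q.1, q.2.1, t, q.2.2.2)

/-- Replace the coordinate `v` by `t`. -/
def updV (q : Pt8 M r) (t : ℝ) : Pt8 M r := (q.1, q.2.1, q.2.2.1, t, q.2.2.2.2)

/-- Replace the coordinate `p` by `t`. -/
def updP (q : Pt8 M r) (t : ℝ) : Pt8 M r :=
  (q.1, q.2.1, q.2.2.1, q.2.2.2.1, t, q.2.2.2.2.2)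

/-- Replace the coordinate `ζ¹_j` by `t`. -/
def updZ1 (q : Pt8 M r) (j : Fin (r + 2)) (t : ℝ) : Pt8 M r :=
  (q.1, q.2.1, q.2.2.1, q.2.2.2.1, q.2.2.2.2.1, q.2.2.2.2.2.1,
    Function.update q.2.2.2.2.2.2.1 j t, q.2.2.2.2.2.2.2)

/-- Replace the coordinate `ζ²_j` by `t`. -/
def updZ2 (q : Pt8 M r) (j : Fin (r + 2)) (t : ℝ) : Pt8 M r :=
  (q.1, q.2.1, q.2.2.1, q.2.2.2.1, q.2.2.2.2.1, q.2.2.2.2.2.1,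
    q.2.2.2.2.2.2.1, Function.update q.2.2.2.2.2.2.2 j t)

/-- Partial derivative with respect to `w₀₀`. -/
noncomputable def pd00 (ϱ : Pt8 M r → ℝ) (q : Pt8 M r) : ℝ :=
  deriv (fun t => ϱ (upd00 M r q t)) q.1

/-- Partial derivative with respect to `w₁₀`. -/
noncomputable def pd10 (ϱ : Pt8 M r → ℝ) (q : Pt8 M r) : ℝ :=
  deriv (fun t => ϱ (upd10 M r q t)) q.2.1

/-- Partial derivative with respect to `w₀₁`. -/
noncomputable def pd01 (ϱ : Pt8 M r → ℝ) (q : Pt8 M r) : ℝ :=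
  deriv (fun t => ϱ (upd01 M r q t)) q.2.2.1

/-- Partial derivative with respect to `v`. -/
noncomputable def pdV (ϱ : Pt8 M r → ℝ) (q : Pt8 M r) : ℝ :=
  deriv (fun t => ϱ (updV M r q t)) q.2.2.2.1

/-- Partial derivative with respect to `p`. -/
noncomputable def pdP (ϱ : Pt8 M r → ℝ) (q : Pt8 M r) : ℝ :=
  deriv (fun t => ϱ (updP M r q t)) q.2.2.2.2.1

/-- Partial derivative with respect to `ζ¹_j`. -/
noncomputable def pdZ1 (j : Fin (r + 2)) (ϱ : Pt8 M r → ℝ) (q : Pt8 M r) : ℝ :=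
  deriv (fun t => ϱ (updZ1 M r q j t)) (q.2.2.2.2.2.2.1 j)

/-- Partial derivative with respect to `ζ²_j`. -/
noncomputable def pdZ2 (j : Fin (r + 2)) (ϱ : Pt8 M r → ℝ) (q : Pt8 M r) : ℝ :=
  deriv (fun t => ϱ (updZ2 M r q j t)) (q.2.2.2.2.2.2.2 j)

/-- The operator `T` (the restriction of `D̂₁ + w₂₂·D̂₂` in the modified coordinates):
`Tϱ = (w₁₀ + v w₀₁) ϱ_{w₀₀}
  + (ζ²₀ + v ζ¹₀ − v³/6 + (θ₀ + v θ₁ − v²/p) ζ¹₁) ϱ_{w₁₀}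
  + (ζ¹₀ + v²/2) ϱ_{w₀₁} + (p²/v) ϱ_p + Σ_{i=1,2} Σ_{k=0}^{r} ζ^i_{k+1} ϱ_{ζ^i_k}`. -/
noncomputable def Tvf (ϱ : Pt8 M r → ℝ) (q : Pt8 M r) : ℝ :=
  (q.2.1 + q.2.2.2.1 * q.2.2.1) * pd00 M r ϱ q
    + (q.2.2.2.2.2.2.2 0 + q.2.2.2.1 * q.2.2.2.2.2.2.1 0
        - (1 / 6) * q.2.2.2.1 ^ 3
        + (q.2.2.2.2.2.1 0 + q.2.2.2.1 * q.2.2.2.2.2.1 1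
            - q.2.2.2.1 ^ 2 / q.2.2.2.2.1) * q.2.2.2.2.2.2.1 1) * pd10 M r ϱ q
    + (q.2.2.2.2.2.2.1 0 + (1 / 2) * q.2.2.2.1 ^ 2) * pd01 M r ϱ q
    + (q.2.2.2.2.1 ^ 2 / q.2.2.2.1) * pdP M r ϱ q
    + ∑ k : Fin (r + 1),
        (q.2.2.2.2.2.2.1 k.succ * pdZ1 M r k.castSucc ϱ q
          + q.2.2.2.2.2.2.2 k.succ * pdZ2 M r k.castSucc ϱ q)

end

section AuxStatement8

set_option maxRecDepth 16000

variable (M r : ℕ)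

/-- Basis direction for `w₀₀`. -/
def e00V : Pt8 M r := (1,0,0,0,0,0,0,0)
/-- Basis direction for `w₁₀`. -/
def e10V : Pt8 M r := (0,1,0,0,0,0,0,0)
/-- Basis direction for `w₀₁`. -/
def e01V : Pt8 M r := (0,0,1,0,0,0,0,0)
/-- Basis direction for `p`. -/
def ePV : Pt8 M r := (0,0,0,0,1,0,0,0)
/-- Basis direction for `ζ¹_j`. -/
def eZ1V (j : Fin (r+2)) : Pt8 M r := (0,0,0,0,0,0,Pi.single j 1,0)
/-- Basis direction for `ζ²_j`. -/
def eZ2V (j : Fin (r+2)) : Pt8 M r := (0,0,0,0,0,0,0,Pi.single j 1)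

lemma update_line {n : ℕ} (f : Fin n → ℝ) (j : Fin n) (t : ℝ) :
    Function.update f j t = f + (t - f j) • (Pi.single j 1 : Fin n → ℝ) := by
  funext i
  by_cases h : i = j
  · subst h; simp
  · simp [Function.update_of_ne h, Pi.single_apply, h]

lemma upd00_line (q : Pt8 M r) (t : ℝ) : upd00 M r q t = q + (t - q.1) • e00V M r := by
  obtain ⟨a,b,c,d,e,f,g,h⟩ := q
  simp [upd00, e00V, Prod.ext_iff]

lemma upd10_line (q : Pt8 M r) (t : ℝ) : upd10 M r q t = q + (t - q.2.1) • e10V M r := by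
  obtain ⟨a,b,c,d,e,f,g,h⟩ := q
  simp [upd10, e10V, Prod.ext_iff]

lemma upd01_line (q : Pt8 M r) (t : ℝ) : upd01 M r q t = q + (t - q.2.2.1) • e01V M r := by
  obtain ⟨a,b,c,d,e,f,g,h⟩ := q
  simp [upd01, e01V, Prod.ext_iff]

lemma updP_line (q : Pt8 M r) (t : ℝ) : updP M r q t = q + (t - q.2.2.2.2.1) • ePV M r := by
  obtain ⟨a,b,c,d,e,f,g,h⟩ := q
  simp [updP, ePV, Prod.ext_iff]

lemma updZ1_line (q : Pt8 M r) (j : Fin (r+2)) (t : ℝ) :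
    updZ1 M r q j t = q + (t - q.2.2.2.2.2.2.1 j) • eZ1V M r j := by
  obtain ⟨a,b,c,d,e,f,g,h⟩ := q
  simp [updZ1, eZ1V, Prod.ext_iff, update_line]

lemma updZ2_line (q : Pt8 M r) (j : Fin (r+2)) (t : ℝ) :
    updZ2 M r q j t = q + (t - q.2.2.2.2.2.2.2 j) • eZ2V M r j := by
  obtain ⟨a,b,c,d,e,f,g,h⟩ := q
  simp [updZ2, eZ2V, Prod.ext_iff, update_line]

lemma hasDerivAt_line {E F : Type*} [NormedAddCommGroup E] [NormedSpace ℝ E]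
    [NormedAddCommGroup F] [NormedSpace ℝ F] (f : E → F) (q e : E) (c : ℝ)
    (h : DifferentiableAt ℝ f q) :
    HasDerivAt (fun t => f (q + (t - c) • e)) (fderiv ℝ f q e) c := by
  have hl : HasDerivAt (fun t : ℝ => q + (t - c) • e) e c := by
    have h1 : HasDerivAt (fun t : ℝ => t - c) 1 c := (hasDerivAt_id c).sub_const c
    simpa using (h1.smul_const e).const_add q
  have hf : HasFDerivAt f (fderiv ℝ f q) ((fun t : ℝ => q + (t - c) • e) c) := by
    simpa using h.hasFDerivAt
  simpa [Function.comp_def] using hf.comp_hasDerivAt c hl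

lemma pd00_eq (ϱ : Pt8 M r → ℝ) (q : Pt8 M r) (h : DifferentiableAt ℝ ϱ q) :
    pd00 M r ϱ q = fderiv ℝ ϱ q (e00V M r) := by
  have hrep : (fun t => ϱ (upd00 M r q t)) = fun t => ϱ (q + (t - q.1) • e00V M r) :=
    funext fun t => by rw [upd00_line]
  rw [pd00, hrep]
  exact (hasDerivAt_line ϱ q (e00V M r) q.1 h).deriv

lemma pd10_eq (ϱ : Pt8 M r → ℝ) (q : Pt8 M r) (h : DifferentiableAt ℝ ϱ q) :
    pd10 M r ϱ q = fderiv ℝ ϱ q (e10V M r) := by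
  have hrep : (fun t => ϱ (upd10 M r q t)) = fun t => ϱ (q + (t - q.2.1) • e10V M r) :=
    funext fun t => by rw [upd10_line]
  rw [pd10, hrep]
  exact (hasDerivAt_line ϱ q (e10V M r) q.2.1 h).deriv

lemma pd01_eq (ϱ : Pt8 M r → ℝ) (q : Pt8 M r) (h : DifferentiableAt ℝ ϱ q) :
    pd01 M r ϱ q = fderiv ℝ ϱ q (e01V M r) := by
  have hrep : (fun t => ϱ (upd01 M r q t)) = fun t => ϱ (q + (t - q.2.2.1) • e01V M r) :=
    funext fun t => by rw [upd01_line]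
  rw [pd01, hrep]
  exact (hasDerivAt_line ϱ q (e01V M r) q.2.2.1 h).deriv

lemma pdP_eq (ϱ : Pt8 M r → ℝ) (q : Pt8 M r) (h : DifferentiableAt ℝ ϱ q) :
    pdP M r ϱ q = fderiv ℝ ϱ q (ePV M r) := by
  have hrep : (fun t => ϱ (updP M r q t)) = fun t => ϱ (q + (t - q.2.2.2.2.1) • ePV M r) :=
    funext fun t => by rw [updP_line]
  rw [pdP, hrep]
  exact (hasDerivAt_line ϱ q (ePV M r) q.2.2.2.2.1 h).deriv

lemma pdZ1_eq (j : Fin (r+2)) (ϱ : Pt8 M r → ℝ) (q : Pt8 M r) (h : DifferentiableAt ℝ ϱ q) :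
    pdZ1 M r j ϱ q = fderiv ℝ ϱ q (eZ1V M r j) := by
  have hrep : (fun t => ϱ (updZ1 M r q j t))
      = fun t => ϱ (q + (t - q.2.2.2.2.2.2.1 j) • eZ1V M r j) :=
    funext fun t => by rw [updZ1_line]
  rw [pdZ1, hrep]
  exact (hasDerivAt_line ϱ q (eZ1V M r j) (q.2.2.2.2.2.2.1 j) h).deriv

lemma pdZ2_eq (j : Fin (r+2)) (ϱ : Pt8 M r → ℝ) (q : Pt8 M r) (h : DifferentiableAt ℝ ϱ q) :
    pdZ2 M r j ϱ q = fderiv ℝ ϱ q (eZ2V M r j) := by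
  have hrep : (fun t => ϱ (updZ2 M r q j t))
      = fun t => ϱ (q + (t - q.2.2.2.2.2.2.2 j) • eZ2V M r j) :=
    funext fun t => by rw [updZ2_line]
  rw [pdZ2, hrep]
  exact (hasDerivAt_line ϱ q (eZ2V M r j) (q.2.2.2.2.2.2.2 j) h).deriv

/-- coefficient of `ϱ_{w₀₀}` in `T`. -/
noncomputable def cf00 (x : Pt8 M r) : ℝ := x.2.1 + x.2.2.2.1 * x.2.2.1
/-- coefficient of `ϱ_{w₁₀}` in `T`. -/
noncomputable def cf10 (x : Pt8 M r) : ℝ :=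
  x.2.2.2.2.2.2.2 0 + x.2.2.2.1 * x.2.2.2.2.2.2.1 0 - (1 / 6) * x.2.2.2.1 ^ 3
    + (x.2.2.2.2.2.1 0 + x.2.2.2.1 * x.2.2.2.2.2.1 1
        - x.2.2.2.1 ^ 2 / x.2.2.2.2.1) * x.2.2.2.2.2.2.1 1
/-- coefficient of `ϱ_{w₀₁}` in `T`. -/
noncomputable def cf01 (x : Pt8 M r) : ℝ := x.2.2.2.2.2.2.1 0 + (1 / 2) * x.2.2.2.1 ^ 2
/-- coefficient of `ϱ_p` in `T`. -/
noncomputable def cfP (x : Pt8 M r) : ℝ := x.2.2.2.2.1 ^ 2 / x.2.2.2.1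
/-- coefficient of `ϱ_{ζ¹_k}` in `T`. -/
noncomputable def cfZ1 (k : Fin (r+1)) (x : Pt8 M r) : ℝ := x.2.2.2.2.2.2.1 k.succ
/-- coefficient of `ϱ_{ζ²_k}` in `T`. -/
noncomputable def cfZ2 (k : Fin (r+1)) (x : Pt8 M r) : ℝ := x.2.2.2.2.2.2.2 k.succ

/-- `T` written via `fderiv`. -/
noncomputable def Gfun (ϱ : Pt8 M r → ℝ) (x : Pt8 M r) : ℝ :=
  cf00 M r x * fderiv ℝ ϱ x (e00V M r) + cf10 M r x * fderiv ℝ ϱ x (e10V M r)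
    + cf01 M r x * fderiv ℝ ϱ x (e01V M r) + cfP M r x * fderiv ℝ ϱ x (ePV M r)
    + ∑ k : Fin (r+1), (cfZ1 M r k x * fderiv ℝ ϱ x (eZ1V M r k.castSucc)
        + cfZ2 M r k x * fderiv ℝ ϱ x (eZ2V M r k.castSucc))

lemma Tvf_eq_Gfun (ϱ : Pt8 M r → ℝ) (x : Pt8 M r) (h : DifferentiableAt ℝ ϱ x) :
    Tvf M r ϱ x = Gfun M r ϱ x := by
  simp only [Tvf, Gfun, cf00, cf10, cf01, cfP, cfZ1, cfZ2,
    pd00_eq M r ϱ x h, pd10_eq M r ϱ x h, pd01_eq M r ϱ x h, pdP_eq M r ϱ x h]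
  congr 1
  exact Finset.sum_congr rfl fun k _ => by
    rw [pdZ1_eq M r _ ϱ x h, pdZ2_eq M r _ ϱ x h]

/-- The main step: differentiating the identity `Tϱ = 0` along a coordinate direction `e`
in whose direction the derivative of `ϱ` already vanishes on `Ω`. -/
theorem stepLemma (Ω : Set (Pt8 M r)) (hΩ : IsOpen Ω)
    (ϱ : Pt8 M r → ℝ) (hϱ : ContDiffOn ℝ (⊤ : ℕ∞) ϱ Ω)
    (hT : ∀ x ∈ Ω, Tvf M r ϱ x = 0)
    (q : Pt8 M r) (hq : q ∈ Ω) (e : Pt8 M r) (c : ℝ)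
    (he : ∀ x ∈ Ω, fderiv ℝ ϱ x e = 0)
    (d00 d10 d01 dP : ℝ) (dZ1 dZ2 : Fin (r+1) → ℝ)
    (h00 : HasDerivAt (fun t => cf00 M r (q + (t - c) • e)) d00 c)
    (h10 : HasDerivAt (fun t => cf10 M r (q + (t - c) • e)) d10 c)
    (h01 : HasDerivAt (fun t => cf01 M r (q + (t - c) • e)) d01 c)
    (hP : HasDerivAt (fun t => cfP M r (q + (t - c) • e)) dP c)
    (hZ1 : ∀ k, HasDerivAt (fun t => cfZ1 M r k (q + (t - c) • e)) (dZ1 k) c)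
    (hZ2 : ∀ k, HasDerivAt (fun t => cfZ2 M r k (q + (t - c) • e)) (dZ2 k) c) :
    d00 * fderiv ℝ ϱ q (e00V M r) + d10 * fderiv ℝ ϱ q (e10V M r)
      + d01 * fderiv ℝ ϱ q (e01V M r) + dP * fderiv ℝ ϱ q (ePV M r)
      + ∑ k : Fin (r+1), (dZ1 k * fderiv ℝ ϱ q (eZ1V M r k.castSucc)
          + dZ2 k * fderiv ℝ ϱ q (eZ2V M r k.castSucc)) = 0 := by
  have hdiff : ∀ x ∈ Ω, DifferentiableAt ℝ ϱ x := fun x hx =>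
    (hϱ.differentiableOn (by simp)).differentiableAt (hΩ.mem_nhds hx)
  have hΩq : Ω ∈ nhds q := hΩ.mem_nhds hq
  have hf'cd : ContDiffOn ℝ (⊤ : ℕ∞) (fderiv ℝ ϱ) Ω := hϱ.fderiv_of_isOpen hΩ (by simp)
  have hf'd : DifferentiableAt ℝ (fderiv ℝ ϱ) q :=
    (hf'cd.differentiableOn (by simp)).differentiableAt hΩq
  have hev : ∀ᶠ y in nhds q, HasFDerivAt ϱ (fderiv ℝ ϱ y) y := by
    filter_upwards [hΩq] with y hy using (hdiff y hy).hasFDerivAt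
  have hsymm := second_derivative_symmetric_of_eventually hev hf'd.hasFDerivAt
  have hkill : ∀ u, fderiv ℝ (fderiv ℝ ϱ) q e u = 0 := by
    intro u
    have happ : HasFDerivAt (fun x => fderiv ℝ ϱ x e)
        ((ContinuousLinearMap.apply ℝ ℝ e).comp (fderiv ℝ (fderiv ℝ ϱ) q)) q :=
      (ContinuousLinearMap.apply ℝ ℝ e).hasFDerivAt.comp q hf'd.hasFDerivAt
    have hz : (fun x => fderiv ℝ ϱ x e) =ᶠ[nhds q] fun _ => (0:ℝ) := by
      filter_upwards [hΩq] with y hy using he y hy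
    have h1 : fderiv ℝ (fun x => fderiv ℝ ϱ x e) q = 0 := by
      rw [hz.fderiv_eq]; exact fderiv_const_apply 0
    have h3 : fderiv ℝ (fun x => fderiv ℝ ϱ x e) q u = 0 := by rw [h1]; rfl
    have h4 : fderiv ℝ (fun x => fderiv ℝ ϱ x e) q u
        = fderiv ℝ (fderiv ℝ ϱ) q u e := by rw [happ.fderiv]; rfl
    rw [hsymm e u, ← h4]
    exact h3
  have hline : ∀ u : Pt8 M r,
      HasDerivAt (fun t => fderiv ℝ ϱ (q + (t - c) • e) u) 0 c := by
    intro u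
    have h1 := hasDerivAt_line (fderiv ℝ ϱ) q e c hf'd
    have h2 := (ContinuousLinearMap.apply ℝ ℝ u).hasFDerivAt.comp_hasDerivAt c h1
    simpa [Function.comp_def, ContinuousLinearMap.apply_apply, hkill u] using h2
  have hcq : q + (c - c) • e = q := by simp
  have A1 : HasDerivAt
      (fun t => cf00 M r (q + (t - c) • e) * fderiv ℝ ϱ (q + (t - c) • e) (e00V M r))
      (d00 * fderiv ℝ ϱ q (e00V M r)) c := by
    simpa [hcq] using h00.fun_mul (hline (e00V M r))
  have A2 : HasDerivAt
      (fun t => cf10 M r (q + (t - c) • e) * fderiv ℝ ϱ (q + (t - c) • e) (e10V M r))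
      (d10 * fderiv ℝ ϱ q (e10V M r)) c := by
    simpa [hcq] using h10.fun_mul (hline (e10V M r))
  have A3 : HasDerivAt
      (fun t => cf01 M r (q + (t - c) • e) * fderiv ℝ ϱ (q + (t - c) • e) (e01V M r))
      (d01 * fderiv ℝ ϱ q (e01V M r)) c := by
    simpa [hcq] using h01.fun_mul (hline (e01V M r))
  have A4 : HasDerivAt
      (fun t => cfP M r (q + (t - c) • e) * fderiv ℝ ϱ (q + (t - c) • e) (ePV M r))
      (dP * fderiv ℝ ϱ q (ePV M r)) c := by
    simpa [hcq] using hP.fun_mul (hline (ePV M r))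
  have AS : HasDerivAt
      (fun t => ∑ k : Fin (r+1),
        (cfZ1 M r k (q + (t - c) • e) * fderiv ℝ ϱ (q + (t - c) • e) (eZ1V M r k.castSucc)
          + cfZ2 M r k (q + (t - c) • e) * fderiv ℝ ϱ (q + (t - c) • e) (eZ2V M r k.castSucc)))
      (∑ k : Fin (r+1), (dZ1 k * fderiv ℝ ϱ q (eZ1V M r k.castSucc)
          + dZ2 k * fderiv ℝ ϱ q (eZ2V M r k.castSucc))) c := by
    refine HasDerivAt.fun_sum fun k _ => ?_
    have := ((hZ1 k).fun_mul (hline (eZ1V M r k.castSucc))).fun_add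
      ((hZ2 k).fun_mul (hline (eZ2V M r k.castSucc)))
    simpa [hcq] using this
  have hbig : HasDerivAt (fun t => Gfun M r ϱ (q + (t - c) • e))
      (d00 * fderiv ℝ ϱ q (e00V M r) + d10 * fderiv ℝ ϱ q (e10V M r)
        + d01 * fderiv ℝ ϱ q (e01V M r) + dP * fderiv ℝ ϱ q (ePV M r)
        + ∑ k : Fin (r+1), (dZ1 k * fderiv ℝ ϱ q (eZ1V M r k.castSucc)
            + dZ2 k * fderiv ℝ ϱ q (eZ2V M r k.castSucc))) c :=
    (((A1.add A2).add A3).add A4).add AS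
  have hcont : Continuous fun t : ℝ => q + (t - c) • e := by
    exact continuous_const.add ((continuous_id.sub continuous_const).smul continuous_const)
  have hmem : ∀ᶠ t in nhds c, q + (t - c) • e ∈ Ω := by
    have h5 := hcont.continuousAt (x := c)
    have h6 : Ω ∈ nhds ((fun t : ℝ => q + (t - c) • e) c) := by
      simpa [hcq] using hΩq
    exact h5.preimage_mem_nhds h6
  have hev0 : (fun t => Gfun M r ϱ (q + (t - c) • e)) =ᶠ[nhds c] fun _ => (0:ℝ) := by
    filter_upwards [hmem] with t ht
    have := Tvf_eq_Gfun M r ϱ _ (hdiff _ ht)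
    rw [← this]
    exact hT _ ht
  have hz : deriv (fun t => Gfun M r ϱ (q + (t - c) • e)) c = 0 := by
    rw [hev0.deriv_eq, deriv_const]
  rw [← hbig.deriv]
  exact hz

end AuxStatement8

/-- (Auxiliary lemma on solutions of `(D̂₁ + w₂₂·D̂₂)ϱ = 0`, coordinate
form.)  For `M ≥ 1`, `r ≥ 1` and a smooth function `ϱ` on `Ω ⊆ {v ≠ 0, p ≠ 0}` not
depending on `ζ¹_{r+1}` and `ζ²_{r+1}`, one has `Tϱ = 0` on `Ω` iff the partial
derivatives of `ϱ` with respect to `w₀₀`, `w₁₀`, `w₀₁`, `p` and all `ζ¹_k`, `ζ²_k`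
(`k = 0, …, r`) vanish identically on `Ω`, i.e. iff `ϱ` depends only on `v, θ₀, …, θ_M`. -/
theorem statement8 (M r : ℕ) (hM : 1 ≤ M) (hr : 1 ≤ r)
    (Ω : Set (Pt8 M r)) (hΩ : IsOpen Ω)
    (hΩv : ∀ q ∈ Ω, q.2.2.2.1 ≠ 0) (hΩp : ∀ q ∈ Ω, q.2.2.2.2.1 ≠ 0)
    (ϱ : Pt8 M r → ℝ) (hϱ : ContDiffOn ℝ (⊤ : ℕ∞) ϱ Ω)
    (hind1 : ∀ (q : Pt8 M r) (t : ℝ), ϱ (updZ1 M r q (Fin.last (r + 1)) t) = ϱ q)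
    (hind2 : ∀ (q : Pt8 M r) (t : ℝ), ϱ (updZ2 M r q (Fin.last (r + 1)) t) = ϱ q) :
    (∀ q ∈ Ω, Tvf M r ϱ q = 0) ↔
      ∀ q ∈ Ω, pd00 M r ϱ q = 0 ∧ pd10 M r ϱ q = 0 ∧ pd01 M r ϱ q = 0 ∧
        pdP M r ϱ q = 0 ∧
        ∀ k : Fin (r + 1), pdZ1 M r k.castSucc ϱ q = 0 ∧ pdZ2 M r k.castSucc ϱ q = 0 := by
  have hdiff : ∀ x ∈ Ω, DifferentiableAt ℝ ϱ x := fun x hx =>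
    (hϱ.differentiableOn (by simp)).differentiableAt (hΩ.mem_nhds hx)
  constructor
  · intro hT
    -- base cases: ϱ does not depend on ζ¹_{r+1}, ζ²_{r+1}
    have hbase2 : ∀ x ∈ Ω, fderiv ℝ ϱ x (eZ2V M r (Fin.last (r+1))) = 0 := by
      intro x hx
      rw [← pdZ2_eq M r (Fin.last (r+1)) ϱ x (hdiff x hx)]
      have hconst : (fun t => ϱ (updZ2 M r x (Fin.last (r+1)) t)) = fun _ => ϱ x :=
        funext fun t => hind2 x t
      rw [pdZ2, hconst]
      exact deriv_const _ _
    have hbase1 : ∀ x ∈ Ω, fderiv ℝ ϱ x (eZ1V M r (Fin.last (r+1))) = 0 := by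
      intro x hx
      rw [← pdZ1_eq M r (Fin.last (r+1)) ϱ x (hdiff x hx)]
      have hconst : (fun t => ϱ (updZ1 M r x (Fin.last (r+1)) t)) = fun _ => ϱ x :=
        funext fun t => hind1 x t
      rw [pdZ1, hconst]
      exact deriv_const _ _
    -- downward step for the ζ² variables
    have step2 : ∀ (i : ℕ) (hi : i + 1 < r + 2) (hi' : i < r + 2),
        (∀ x ∈ Ω, fderiv ℝ ϱ x (eZ2V M r ⟨i+1, hi⟩) = 0) →
        ∀ x ∈ Ω, fderiv ℝ ϱ x (eZ2V M r ⟨i, hi'⟩) = 0 := by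
      intro i hi hi' he x hx
      set j : Fin (r+2) := ⟨i+1, hi⟩ with hj
      have htr : ∀ t : ℝ, x + (t - x.2.2.2.2.2.2.2 j) • eZ2V M r j = updZ2 M r x j t :=
        fun t => (updZ2_line M r x j t).symm
      have hne0 : (0 : Fin (r+2)) ≠ j := by simp [hj, Fin.ext_iff]
      have h00 : HasDerivAt (fun t => cf00 M r (x + (t - x.2.2.2.2.2.2.2 j) • eZ2V M r j)) 0
          (x.2.2.2.2.2.2.2 j) := by
        simp only [htr, cf00, updZ2]; exact hasDerivAt_const _ _
      have h10 : HasDerivAt (fun t => cf10 M r (x + (t - x.2.2.2.2.2.2.2 j) • eZ2V M r j)) 0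
          (x.2.2.2.2.2.2.2 j) := by
        simp only [htr, cf10, updZ2, Function.update_of_ne hne0]; exact hasDerivAt_const _ _
      have h01 : HasDerivAt (fun t => cf01 M r (x + (t - x.2.2.2.2.2.2.2 j) • eZ2V M r j)) 0
          (x.2.2.2.2.2.2.2 j) := by
        simp only [htr, cf01, updZ2]; exact hasDerivAt_const _ _
      have hPc : HasDerivAt (fun t => cfP M r (x + (t - x.2.2.2.2.2.2.2 j) • eZ2V M r j)) 0
          (x.2.2.2.2.2.2.2 j) := by
        simp only [htr, cfP, updZ2]; exact hasDerivAt_const _ _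
      have hZ1 : ∀ k, HasDerivAt
          (fun t => cfZ1 M r k (x + (t - x.2.2.2.2.2.2.2 j) • eZ2V M r j))
          ((fun _ => (0:ℝ)) k) (x.2.2.2.2.2.2.2 j) := by
        intro k
        simp only [htr, cfZ1, updZ2]; exact hasDerivAt_const _ _
      have hZ2 : ∀ k, HasDerivAt
          (fun t => cfZ2 M r k (x + (t - x.2.2.2.2.2.2.2 j) • eZ2V M r j))
          ((fun k => if k = (⟨i, by omega⟩ : Fin (r+1)) then (1:ℝ) else 0) k)
          (x.2.2.2.2.2.2.2 j) := by
        intro k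
        simp only [htr, cfZ2, updZ2]
        by_cases hk : k = (⟨i, by omega⟩ : Fin (r+1))
        · have hks : k.succ = j := by
            subst hk; rw [hj]; exact Fin.ext rfl
          rw [if_pos hk]
          have hfun : (fun t => Function.update x.2.2.2.2.2.2.2 j t k.succ) = fun t => t := by
            funext t; rw [hks, Function.update_self]
          rw [hfun]
          exact hasDerivAt_id _
        · have hks : k.succ ≠ j := by
            intro hcon
            apply hk
            have h1 : (k.succ : ℕ) = i + 1 := by rw [hcon, hj]
            rw [Fin.val_succ] at h1
            exact Fin.ext (show (k:ℕ) = i by omega)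
          rw [if_neg hk]
          simp only [Function.update_of_ne hks]
          exact hasDerivAt_const _ _
      have key := stepLemma M r Ω hΩ ϱ hϱ hT x hx (eZ2V M r j) (x.2.2.2.2.2.2.2 j) he
        0 0 0 0 (fun _ => 0) (fun k => if k = (⟨i, by omega⟩ : Fin (r+1)) then (1:ℝ) else 0)
        h00 h10 h01 hPc hZ1 hZ2
      simp only [zero_mul, zero_add, add_zero, ite_mul, one_mul] at key
      rw [Finset.sum_ite_eq'] at key
      simpa [Fin.castSucc_mk] using key
    -- full ζ² chain
    have chain2 : ∀ (d i : ℕ), i + d = r + 1 → ∀ (hi : i < r + 2),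
        ∀ x ∈ Ω, fderiv ℝ ϱ x (eZ2V M r ⟨i, hi⟩) = 0 := by
      intro d
      induction d with
      | zero =>
        intro i h hi x hx
        have hieq : i = r + 1 := by omega
        subst hieq
        exact hbase2 x hx
      | succ d ih =>
        intro i h hi x hx
        exact step2 i (by omega) hi (fun y hy => ih (i+1) (by omega) (by omega) y hy) x hx
    have hZ2all : ∀ x ∈ Ω, ∀ k : Fin (r+1), fderiv ℝ ϱ x (eZ2V M r k.castSucc) = 0 := by
      intro x hx k
      have hcs : k.castSucc = (⟨(k:ℕ), Nat.lt_succ_of_lt k.isLt⟩ : Fin (r+2)) := by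
        apply Fin.ext; simp
      rw [hcs]
      exact chain2 (r + 1 - (k:ℕ)) (k:ℕ) (by have := k.isLt; omega) _ x hx
    -- downward step for the ζ¹ variables (for indices ≥ 2)
    have step1 : ∀ (i : ℕ) (h1 : 1 ≤ i) (hi : i + 1 < r + 2) (hi' : i < r + 2),
        (∀ x ∈ Ω, fderiv ℝ ϱ x (eZ1V M r ⟨i+1, hi⟩) = 0) →
        ∀ x ∈ Ω, fderiv ℝ ϱ x (eZ1V M r ⟨i, hi'⟩) = 0 := by
      intro i h1 hi hi' he x hx
      set j : Fin (r+2) := ⟨i+1, hi⟩ with hj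
      have htr : ∀ t : ℝ, x + (t - x.2.2.2.2.2.2.1 j) • eZ1V M r j = updZ1 M r x j t :=
        fun t => (updZ1_line M r x j t).symm
      have hne0 : (0 : Fin (r+2)) ≠ j := by simp [hj, Fin.ext_iff]
      have hne1 : (1 : Fin (r+2)) ≠ j := by
        intro hcon
        have h2 : ((1 : Fin (r+2)) : ℕ) = ((j : Fin (r+2)) : ℕ) := congrArg Fin.val hcon
        rw [hj] at h2
        simp at h2
        omega
      have h00 : HasDerivAt (fun t => cf00 M r (x + (t - x.2.2.2.2.2.2.1 j) • eZ1V M r j)) 0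
          (x.2.2.2.2.2.2.1 j) := by
        simp only [htr, cf00, updZ1]; exact hasDerivAt_const _ _
      have h10 : HasDerivAt (fun t => cf10 M r (x + (t - x.2.2.2.2.2.2.1 j) • eZ1V M r j)) 0
          (x.2.2.2.2.2.2.1 j) := by
        simp only [htr, cf10, updZ1, Function.update_of_ne hne0, Function.update_of_ne hne1]
        exact hasDerivAt_const _ _
      have h01 : HasDerivAt (fun t => cf01 M r (x + (t - x.2.2.2.2.2.2.1 j) • eZ1V M r j)) 0
          (x.2.2.2.2.2.2.1 j) := by
        simp only [htr, cf01, updZ1, Function.update_of_ne hne0]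
        exact hasDerivAt_const _ _
      have hPc : HasDerivAt (fun t => cfP M r (x + (t - x.2.2.2.2.2.2.1 j) • eZ1V M r j)) 0
          (x.2.2.2.2.2.2.1 j) := by
        simp only [htr, cfP, updZ1]; exact hasDerivAt_const _ _
      have hZ2 : ∀ k, HasDerivAt
          (fun t => cfZ2 M r k (x + (t - x.2.2.2.2.2.2.1 j) • eZ1V M r j))
          ((fun _ => (0:ℝ)) k) (x.2.2.2.2.2.2.1 j) := by
        intro k
        simp only [htr, cfZ2, updZ1]; exact hasDerivAt_const _ _
      have hZ1 : ∀ k, HasDerivAt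
          (fun t => cfZ1 M r k (x + (t - x.2.2.2.2.2.2.1 j) • eZ1V M r j))
          ((fun k => if k = (⟨i, by omega⟩ : Fin (r+1)) then (1:ℝ) else 0) k)
          (x.2.2.2.2.2.2.1 j) := by
        intro k
        simp only [htr, cfZ1, updZ1]
        by_cases hk : k = (⟨i, by omega⟩ : Fin (r+1))
        · have hks : k.succ = j := by
            subst hk; rw [hj]; exact Fin.ext rfl
          rw [if_pos hk]
          have hfun : (fun t => Function.update x.2.2.2.2.2.2.1 j t k.succ) = fun t => t := by
            funext t; rw [hks, Function.update_self]
          rw [hfun]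
          exact hasDerivAt_id _
        · have hks : k.succ ≠ j := by
            intro hcon
            apply hk
            have h2 : (k.succ : ℕ) = i + 1 := by rw [hcon, hj]
            rw [Fin.val_succ] at h2
            exact Fin.ext (show (k:ℕ) = i by omega)
          rw [if_neg hk]
          simp only [Function.update_of_ne hks]
          exact hasDerivAt_const _ _
      have key := stepLemma M r Ω hΩ ϱ hϱ hT x hx (eZ1V M r j) (x.2.2.2.2.2.2.1 j) he
        0 0 0 0 (fun k => if k = (⟨i, by omega⟩ : Fin (r+1)) then (1:ℝ) else 0) (fun _ => 0)
        h00 h10 h01 hPc hZ1 hZ2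
      simp only [zero_mul, zero_add, add_zero, ite_mul, one_mul] at key
      rw [Finset.sum_ite_eq'] at key
      simpa [Fin.castSucc_mk] using key
    have chain1 : ∀ (d i : ℕ), 1 ≤ i → i + d = r + 1 → ∀ (hi : i < r + 2),
        ∀ x ∈ Ω, fderiv ℝ ϱ x (eZ1V M r ⟨i, hi⟩) = 0 := by
      intro d
      induction d with
      | zero =>
        intro i h1 h hi x hx
        have hieq : i = r + 1 := by omega
        subst hieq
        exact hbase1 x hx
      | succ d ih =>
        intro i h1 h hi x hx
        exact step1 i h1 (by omega) hi (fun y hy => ih (i+1) (by omega) (by omega) (by omega) y hy) x hx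
    -- derivative in `w₁₀` vanishes: use direction ζ²₀
    have hZ20 : ∀ x ∈ Ω, fderiv ℝ ϱ x (eZ2V M r (0 : Fin (r+2))) = 0 := by
      intro x hx
      have h2 := chain2 (r+1) 0 (by omega) (by omega) x hx
      have h0 : (⟨0, by omega⟩ : Fin (r+2)) = 0 := Fin.ext (by simp)
      rwa [h0] at h2
    have h10res : ∀ x ∈ Ω, fderiv ℝ ϱ x (e10V M r) = 0 := by
      intro x hx
      have htr : ∀ t : ℝ,
          x + (t - x.2.2.2.2.2.2.2 (0 : Fin (r+2))) • eZ2V M r 0 = updZ2 M r x 0 t :=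
        fun t => (updZ2_line M r x 0 t).symm
      have h00 : HasDerivAt
          (fun t => cf00 M r (x + (t - x.2.2.2.2.2.2.2 (0 : Fin (r+2))) • eZ2V M r 0)) 0
          (x.2.2.2.2.2.2.2 (0 : Fin (r+2))) := by
        simp only [htr, cf00, updZ2]; exact hasDerivAt_const _ _
      have h10 : HasDerivAt
          (fun t => cf10 M r (x + (t - x.2.2.2.2.2.2.2 (0 : Fin (r+2))) • eZ2V M r 0)) 1
          (x.2.2.2.2.2.2.2 (0 : Fin (r+2))) := by
        simp only [htr, cf10, updZ2, Function.update_self]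
        exact (((hasDerivAt_id _).add_const _).sub_const _).add_const _
      have h01 : HasDerivAt
          (fun t => cf01 M r (x + (t - x.2.2.2.2.2.2.2 (0 : Fin (r+2))) • eZ2V M r 0)) 0
          (x.2.2.2.2.2.2.2 (0 : Fin (r+2))) := by
        simp only [htr, cf01, updZ2]; exact hasDerivAt_const _ _
      have hPc : HasDerivAt
          (fun t => cfP M r (x + (t - x.2.2.2.2.2.2.2 (0 : Fin (r+2))) • eZ2V M r 0)) 0
          (x.2.2.2.2.2.2.2 (0 : Fin (r+2))) := by
        simp only [htr, cfP, updZ2]; exact hasDerivAt_const _ _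
      have hZ1 : ∀ k, HasDerivAt
          (fun t => cfZ1 M r k (x + (t - x.2.2.2.2.2.2.2 (0 : Fin (r+2))) • eZ2V M r 0))
          ((fun _ => (0:ℝ)) k) (x.2.2.2.2.2.2.2 (0 : Fin (r+2))) := by
        intro k
        simp only [htr, cfZ1, updZ2]; exact hasDerivAt_const _ _
      have hZ2 : ∀ k, HasDerivAt
          (fun t => cfZ2 M r k (x + (t - x.2.2.2.2.2.2.2 (0 : Fin (r+2))) • eZ2V M r 0))
          ((fun _ => (0:ℝ)) k) (x.2.2.2.2.2.2.2 (0 : Fin (r+2))) := by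
        intro k
        simp only [htr, cfZ2, updZ2, Function.update_of_ne (Fin.succ_ne_zero k)]
        exact hasDerivAt_const _ _
      have key := stepLemma M r Ω hΩ ϱ hϱ hT x hx (eZ2V M r 0) (x.2.2.2.2.2.2.2 (0 : Fin (r+2)))
        hZ20 0 1 0 0 (fun _ => 0) (fun _ => 0) h00 h10 h01 hPc hZ1 hZ2
      simpa using key
    -- derivative in `ζ¹₀` vanishes: use direction ζ¹₁
    have hZ11 : ∀ x ∈ Ω, fderiv ℝ ϱ x (eZ1V M r (1 : Fin (r+2))) = 0 := by
      intro x hx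
      have h2 := chain1 r 1 le_rfl (by omega) (by omega) x hx
      have h0 : (⟨1, by omega⟩ : Fin (r+2)) = 1 := Fin.ext (by simp)
      rwa [h0] at h2
    have hZ10 : ∀ x ∈ Ω, fderiv ℝ ϱ x (eZ1V M r (0 : Fin (r+2))) = 0 := by
      intro x hx
      have htr : ∀ t : ℝ,
          x + (t - x.2.2.2.2.2.2.1 (1 : Fin (r+2))) • eZ1V M r 1 = updZ1 M r x 1 t :=
        fun t => (updZ1_line M r x 1 t).symm
      have hne01 : (0 : Fin (r+2)) ≠ (1 : Fin (r+2)) := by simp [Fin.ext_iff]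
      have h00 : HasDerivAt
          (fun t => cf00 M r (x + (t - x.2.2.2.2.2.2.1 (1 : Fin (r+2))) • eZ1V M r 1)) 0
          (x.2.2.2.2.2.2.1 (1 : Fin (r+2))) := by
        simp only [htr, cf00, updZ1]; exact hasDerivAt_const _ _
      have h10 : HasDerivAt
          (fun t => cf10 M r (x + (t - x.2.2.2.2.2.2.1 (1 : Fin (r+2))) • eZ1V M r 1))
          (x.2.2.2.2.2.1 0 + x.2.2.2.1 * x.2.2.2.2.2.1 1 - x.2.2.2.1 ^ 2 / x.2.2.2.2.1)
          (x.2.2.2.2.2.2.1 (1 : Fin (r+2))) := by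
        simp only [htr, cf10, updZ1, Function.update_of_ne hne01, Function.update_self]
        simpa using ((hasDerivAt_id (x.2.2.2.2.2.2.1 (1 : Fin (r+2)))).const_mul
          (x.2.2.2.2.2.1 0 + x.2.2.2.1 * x.2.2.2.2.2.1 1 - x.2.2.2.1 ^ 2 / x.2.2.2.2.1)).const_add
          (x.2.2.2.2.2.2.2 0 + x.2.2.2.1 * x.2.2.2.2.2.2.1 0 - 1 / 6 * x.2.2.2.1 ^ 3)
      have h01 : HasDerivAt
          (fun t => cf01 M r (x + (t - x.2.2.2.2.2.2.1 (1 : Fin (r+2))) • eZ1V M r 1)) 0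
          (x.2.2.2.2.2.2.1 (1 : Fin (r+2))) := by
        simp only [htr, cf01, updZ1, Function.update_of_ne hne01]
        exact hasDerivAt_const _ _
      have hPc : HasDerivAt
          (fun t => cfP M r (x + (t - x.2.2.2.2.2.2.1 (1 : Fin (r+2))) • eZ1V M r 1)) 0
          (x.2.2.2.2.2.2.1 (1 : Fin (r+2))) := by
        simp only [htr, cfP, updZ1]; exact hasDerivAt_const _ _
      have hZ1 : ∀ k, HasDerivAt
          (fun t => cfZ1 M r k (x + (t - x.2.2.2.2.2.2.1 (1 : Fin (r+2))) • eZ1V M r 1))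
          ((fun k => if k = (0 : Fin (r+1)) then (1:ℝ) else 0) k)
          (x.2.2.2.2.2.2.1 (1 : Fin (r+2))) := by
        intro k
        simp only [htr, cfZ1, updZ1]
        by_cases hk : k = (0 : Fin (r+1))
        · have hks : k.succ = (1 : Fin (r+2)) := by
            subst hk; exact Fin.succ_zero_eq_one
          rw [if_pos hk]
          have hfun : (fun t => Function.update x.2.2.2.2.2.2.1 1 t k.succ) = fun t => t := by
            funext t; rw [hks, Function.update_self]
          rw [hfun]
          exact hasDerivAt_id _
        · have hks : k.succ ≠ (1 : Fin (r+2)) := by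
            intro hcon
            apply hk
            have h2 : (k.succ : ℕ) = 1 := by rw [hcon]; simp
            rw [Fin.val_succ] at h2
            exact Fin.ext (by simpa using h2)
          rw [if_neg hk]
          simp only [Function.update_of_ne hks]
          exact hasDerivAt_const _ _
      have hZ2 : ∀ k, HasDerivAt
          (fun t => cfZ2 M r k (x + (t - x.2.2.2.2.2.2.1 (1 : Fin (r+2))) • eZ1V M r 1))
          ((fun _ => (0:ℝ)) k) (x.2.2.2.2.2.2.1 (1 : Fin (r+2))) := by
        intro k
        simp only [htr, cfZ2, updZ1]; exact hasDerivAt_const _ _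
      have key := stepLemma M r Ω hΩ ϱ hϱ hT x hx (eZ1V M r 1) (x.2.2.2.2.2.2.1 (1 : Fin (r+2)))
        hZ11 0 (x.2.2.2.2.2.1 0 + x.2.2.2.1 * x.2.2.2.2.2.1 1 - x.2.2.2.1 ^ 2 / x.2.2.2.2.1) 0 0
        (fun k => if k = (0 : Fin (r+1)) then (1:ℝ) else 0) (fun _ => 0)
        h00 h10 h01 hPc hZ1 hZ2
      simp only [zero_mul, zero_add, add_zero, ite_mul, one_mul] at key
      rw [Finset.sum_ite_eq'] at key
      simpa [h10res x hx, Fin.castSucc_zero] using key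
    -- derivative in `w₀₁` vanishes: use direction ζ¹₀
    have h01res : ∀ x ∈ Ω, fderiv ℝ ϱ x (e01V M r) = 0 := by
      intro x hx
      have htr : ∀ t : ℝ,
          x + (t - x.2.2.2.2.2.2.1 (0 : Fin (r+2))) • eZ1V M r 0 = updZ1 M r x 0 t :=
        fun t => (updZ1_line M r x 0 t).symm
      have hne10 : (1 : Fin (r+2)) ≠ (0 : Fin (r+2)) := by simp [Fin.ext_iff]
      have h00 : HasDerivAt
          (fun t => cf00 M r (x + (t - x.2.2.2.2.2.2.1 (0 : Fin (r+2))) • eZ1V M r 0)) 0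
          (x.2.2.2.2.2.2.1 (0 : Fin (r+2))) := by
        simp only [htr, cf00, updZ1]; exact hasDerivAt_const _ _
      have h10 : HasDerivAt
          (fun t => cf10 M r (x + (t - x.2.2.2.2.2.2.1 (0 : Fin (r+2))) • eZ1V M r 0))
          x.2.2.2.1 (x.2.2.2.2.2.2.1 (0 : Fin (r+2))) := by
        simp only [htr, cf10, updZ1, Function.update_of_ne hne10, Function.update_self]
        have h2 := (((((hasDerivAt_id (x.2.2.2.2.2.2.1 (0 : Fin (r+2)))).const_mul
          x.2.2.2.1).const_add (x.2.2.2.2.2.2.2 0)).sub_const (1 / 6 * x.2.2.2.1 ^ 3)).add_const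
          ((x.2.2.2.2.2.1 0 + x.2.2.2.1 * x.2.2.2.2.2.1 1 - x.2.2.2.1 ^ 2 / x.2.2.2.2.1)
            * x.2.2.2.2.2.2.1 1))
        simpa using h2
      have h01 : HasDerivAt
          (fun t => cf01 M r (x + (t - x.2.2.2.2.2.2.1 (0 : Fin (r+2))) • eZ1V M r 0)) 1
          (x.2.2.2.2.2.2.1 (0 : Fin (r+2))) := by
        simp only [htr, cf01, updZ1, Function.update_self]
        exact (hasDerivAt_id _).add_const _
      have hPc : HasDerivAt
          (fun t => cfP M r (x + (t - x.2.2.2.2.2.2.1 (0 : Fin (r+2))) • eZ1V M r 0)) 0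
          (x.2.2.2.2.2.2.1 (0 : Fin (r+2))) := by
        simp only [htr, cfP, updZ1]; exact hasDerivAt_const _ _
      have hZ1 : ∀ k, HasDerivAt
          (fun t => cfZ1 M r k (x + (t - x.2.2.2.2.2.2.1 (0 : Fin (r+2))) • eZ1V M r 0))
          ((fun _ => (0:ℝ)) k) (x.2.2.2.2.2.2.1 (0 : Fin (r+2))) := by
        intro k
        simp only [htr, cfZ1, updZ1, Function.update_of_ne (Fin.succ_ne_zero k)]
        exact hasDerivAt_const _ _
      have hZ2 : ∀ k, HasDerivAt
          (fun t => cfZ2 M r k (x + (t - x.2.2.2.2.2.2.1 (0 : Fin (r+2))) • eZ1V M r 0))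
          ((fun _ => (0:ℝ)) k) (x.2.2.2.2.2.2.1 (0 : Fin (r+2))) := by
        intro k
        simp only [htr, cfZ2, updZ1]; exact hasDerivAt_const _ _
      have key := stepLemma M r Ω hΩ ϱ hϱ hT x hx (eZ1V M r 0) (x.2.2.2.2.2.2.1 (0 : Fin (r+2)))
        hZ10 0 x.2.2.2.1 1 0 (fun _ => 0) (fun _ => 0) h00 h10 h01 hPc hZ1 hZ2
      simpa [h10res x hx] using key
    -- derivative in `w₀₀` vanishes: use direction w₀₁
    have h00res : ∀ x ∈ Ω, fderiv ℝ ϱ x (e00V M r) = 0 := by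
      intro x hx
      have htr : ∀ t : ℝ, x + (t - x.2.2.1) • e01V M r = upd01 M r x t :=
        fun t => (upd01_line M r x t).symm
      have h00 : HasDerivAt (fun t => cf00 M r (x + (t - x.2.2.1) • e01V M r))
          x.2.2.2.1 x.2.2.1 := by
        simp only [htr, cf00, upd01]
        simpa using ((hasDerivAt_id x.2.2.1).const_mul x.2.2.2.1).const_add x.2.1
      have h10 : HasDerivAt (fun t => cf10 M r (x + (t - x.2.2.1) • e01V M r)) 0 x.2.2.1 := by
        simp only [htr, cf10, upd01]; exact hasDerivAt_const _ _
      have h01 : HasDerivAt (fun t => cf01 M r (x + (t - x.2.2.1) • e01V M r)) 0 x.2.2.1 := by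
        simp only [htr, cf01, upd01]; exact hasDerivAt_const _ _
      have hPc : HasDerivAt (fun t => cfP M r (x + (t - x.2.2.1) • e01V M r)) 0 x.2.2.1 := by
        simp only [htr, cfP, upd01]; exact hasDerivAt_const _ _
      have hZ1 : ∀ k, HasDerivAt (fun t => cfZ1 M r k (x + (t - x.2.2.1) • e01V M r))
          ((fun _ => (0:ℝ)) k) x.2.2.1 := by
        intro k
        simp only [htr, cfZ1, upd01]; exact hasDerivAt_const _ _
      have hZ2 : ∀ k, HasDerivAt (fun t => cfZ2 M r k (x + (t - x.2.2.1) • e01V M r))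
          ((fun _ => (0:ℝ)) k) x.2.2.1 := by
        intro k
        simp only [htr, cfZ2, upd01]; exact hasDerivAt_const _ _
      have key := stepLemma M r Ω hΩ ϱ hϱ hT x hx (e01V M r) x.2.2.1
        h01res x.2.2.2.1 0 0 0 (fun _ => 0) (fun _ => 0) h00 h10 h01 hPc hZ1 hZ2
      have key2 : x.2.2.2.1 * fderiv ℝ ϱ x (e00V M r) = 0 := by simpa using key
      exact (mul_eq_zero.mp key2).resolve_left (hΩv x hx)
    have hZ1all : ∀ x ∈ Ω, ∀ k : Fin (r+1), fderiv ℝ ϱ x (eZ1V M r k.castSucc) = 0 := by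
      intro x hx k
      by_cases hk : (k:ℕ) = 0
      · have h0 : k.castSucc = (0 : Fin (r+2)) := Fin.ext (by simp [hk])
        rw [h0]; exact hZ10 x hx
      · have hcs : k.castSucc = (⟨(k:ℕ), Nat.lt_succ_of_lt k.isLt⟩ : Fin (r+2)) :=
          Fin.ext (by simp)
        rw [hcs]
        exact chain1 (r + 1 - (k:ℕ)) (k:ℕ) (by omega) (by have := k.isLt; omega) _ x hx
    -- derivative in `p` vanishes: evaluate `Tϱ = 0` itself
    have hPres : ∀ x ∈ Ω, fderiv ℝ ϱ x (ePV M r) = 0 := by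
      intro x hx
      have h0 := hT x hx
      rw [Tvf_eq_Gfun M r ϱ x (hdiff x hx), Gfun] at h0
      rw [h00res x hx, h10res x hx, h01res x hx] at h0
      rw [Finset.sum_eq_zero (fun k _ => by
        rw [hZ1all x hx k, hZ2all x hx k]; ring)] at h0
      simp only [mul_zero, zero_add, add_zero] at h0
      have hcfP : cfP M r x ≠ 0 := by
        simp only [cfP]
        exact div_ne_zero (pow_ne_zero _ (hΩp x hx)) (hΩv x hx)
      exact (mul_eq_zero.mp h0).resolve_left hcfP
    intro q hq
    refine ⟨?_, ?_, ?_, ?_, fun k => ⟨?_, ?_⟩⟩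
    · rw [pd00_eq M r ϱ q (hdiff q hq)]; exact h00res q hq
    · rw [pd10_eq M r ϱ q (hdiff q hq)]; exact h10res q hq
    · rw [pd01_eq M r ϱ q (hdiff q hq)]; exact h01res q hq
    · rw [pdP_eq M r ϱ q (hdiff q hq)]; exact hPres q hq
    · rw [pdZ1_eq M r _ ϱ q (hdiff q hq)]; exact hZ1all q hq k
    · rw [pdZ2_eq M r _ ϱ q (hdiff q hq)]; exact hZ2all q hq k
  · intro h q hq
    obtain ⟨h1, h2, h3, h4, h5⟩ := h q hq
    simp only [Tvf, h1, h2, h3, h4, mul_zero, zero_add, add_zero]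
    exact Finset.sum_eq_zero fun k _ => by rw [(h5 k).1, (h5 k).2]; ring
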